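/- Let G be a finite simple graph with positive real vertex weights ω, and let S be an independent set of G that is a heavy set, i.e., for every independent set C of the induced subgraph G[N(S)] it holds that ω(N(C) ∩ S) ≥ ω(C). Then for every independent set Ĩ of G, the set (Ĩ \ N(S)) ∪ S is an independent set of G with ω((Ĩ \ N(S)) ∪ S) ≥ ω(Ĩ). -/

import Mathlib

open scoped Classical

/-- `S` is an independent set of vertices in `G`: no two members are adjacent. -/
def IsIndepSet {V : Type*} (G : SimpleGraph V) (S : Finset V) : Prop :=
  ∀ a ∈ S, ∀ b ∈ S, ¬ G.Adj a b

/-- The maximum total `w`-weight of an independent set of `G` contained in `A`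
(the weighted independence number of the subgraph of `G` induced on `A`). -/
noncomputable def alphaOn {V : Type*} [Fintype V] (G : SimpleGraph V) (w : V → ℝ)
    (A : Set V) : ℝ :=
  sSup {x : ℝ | ∃ S : Finset V, ↑S ⊆ A ∧ IsIndepSet G S ∧ x = ∑ v ∈ S, w v}

/-- The maximum total `w`-weight of an independent set of `G`. -/
noncomputable def alpha {V : Type*} [Fintype V] (G : SimpleGraph V) (w : V → ℝ) : ℝ :=
  alphaOn G w Set.univ

/-- `S` is a maximum `w`-weight independent set of `G`. -/
def IsMWIS {V : Type*} [Fintype V] (G : SimpleGraph V) (w : V → ℝ) (S : Finset V) : Prop :=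
  IsIndepSet G S ∧ ∑ v ∈ S, w v = alpha G w

/-- The closed neighborhood `N[v]` of a vertex. -/
def closedNbhd {V : Type*} (G : SimpleGraph V) (v : V) : Set V :=
  insert v (G.neighborSet v)

/-- The open neighborhood `N(S)` of a set of vertices. -/
def setNbhd {V : Type*} (G : SimpleGraph V) (S : Set V) : Set V :=
  (⋃ s ∈ S, G.neighborSet s) \ S

/-- The closed neighborhood `N[S]` of a set of vertices. -/
def closedSetNbhd {V : Type*} (G : SimpleGraph V) (S : Set V) : Set V :=
  setNbhd G S ∪ S

theorem stmt_12 {V : Type*} [Fintype V] (G : SimpleGraph V) (w : V → ℝ)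
    (hw : ∀ x, 0 < w x) (S : Finset V) (hSind : IsIndepSet G S)
    (hheavy : ∀ C : Finset V, ↑C ⊆ setNbhd G (↑S : Set V) → IsIndepSet G C →
      ∑ x ∈ C, w x ≤ ∑ x ∈ S.filter (fun s => s ∈ setNbhd G (↑C : Set V)), w x) :
    ∀ I : Finset V, IsIndepSet G I →
      IsIndepSet G ((I.filter (fun x => x ∉ setNbhd G (↑S : Set V))) ∪ S) ∧
        ∑ x ∈ I, w x ≤
          ∑ x ∈ (I.filter (fun x => x ∉ setNbhd G (↑S : Set V))) ∪ S, w x := by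
  intro I hI
  classical
  set A : Finset V := I.filter (fun x => x ∉ setNbhd G (↑S : Set V)) with hAdef
  set C : Finset V := I.filter (fun x => x ∈ setNbhd G (↑S : Set V)) with hCdef
  have hCsub : (↑C : Set V) ⊆ setNbhd G (↑S : Set V) := by
    intro x hx
    exact (Finset.mem_filter.1 hx).2
  have hCind : IsIndepSet G C := fun a ha b hb =>
    hI a (Finset.mem_of_mem_filter a ha) b (Finset.mem_of_mem_filter b hb)
  have hC := hheavy C hCsub hCind
  set D : Finset V := S.filter (fun s => s ∈ setNbhd G (↑C : Set V)) with hDdef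
  have hAD : Disjoint A D := by
    rw [Finset.disjoint_left]
    intro a haA haD
    have hsN : a ∈ setNbhd G (↑C : Set V) := (Finset.mem_filter.1 haD).2
    obtain ⟨hNb, -⟩ := hsN
    rw [Set.mem_iUnion₂] at hNb
    obtain ⟨c, hcC, hadj⟩ := hNb
    exact hI c (Finset.mem_of_mem_filter c hcC) a (Finset.mem_of_mem_filter a haA) hadj
  refine ⟨?_, ?_⟩
  · intro a ha b hb hab
    rcases Finset.mem_union.1 ha with ha' | ha' <;>
      rcases Finset.mem_union.1 hb with hb' | hb'
    · exact hI a (Finset.mem_of_mem_filter a ha') b (Finset.mem_of_mem_filter b hb') hab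
    · have hnA := (Finset.mem_filter.1 ha').2
      by_cases haS : a ∈ S
      · exact hSind a haS b hb' hab
      · exact hnA ⟨Set.mem_iUnion₂.2 ⟨b, hb', hab.symm⟩, haS⟩
    · have hnA := (Finset.mem_filter.1 hb').2
      by_cases hbS : b ∈ S
      · exact hSind a ha' b hbS hab
      · exact hnA ⟨Set.mem_iUnion₂.2 ⟨a, ha', hab⟩, hbS⟩
    · exact hSind a ha' b hb' hab
  · have hsplit : ∑ x ∈ I, w x = ∑ x ∈ C, w x + ∑ x ∈ A, w x := by
      rw [hCdef, hAdef]
      exact (Finset.sum_filter_add_sum_filter_not I _ w).symm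
    have h1 : ∑ x ∈ I, w x ≤ ∑ x ∈ D, w x + ∑ x ∈ A, w x := by
      rw [hsplit]
      exact add_le_add_left hC _
    have h2 : ∑ x ∈ D, w x + ∑ x ∈ A, w x = ∑ x ∈ A ∪ D, w x := by
      rw [add_comm, ← Finset.sum_union hAD]
    have h3 : A ∪ D ⊆ A ∪ S := by
      apply Finset.union_subset_union_right
      exact Finset.filter_subset _ _
    calc ∑ x ∈ I, w x ≤ ∑ x ∈ A ∪ D, w x := by rw [← h2]; exact h1
      _ ≤ ∑ x ∈ A ∪ S, w x :=
        Finset.sum_le_sum_of_subset_of_nonneg h3 (fun i _ _ => (hw i).le)
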